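/- Let Ω = (0, L) × (0, 1) ⊂ ℝ² with L > 0, e_g = (0, −1), u_s ∈ ℝ, κ > 0, and let y denote the second coordinate function on Ω. Let u : cl(Ω) → ℝ² be continuously differentiable with div u = 0 in Ω and u·n = 0 on ∂Ω, and let φ : cl(Ω) × [0, T] → ℝ be continuously differentiable in time and twice continuously differentiable in space, satisfying ∂φ/∂t + (u + u_s e_g)·∇φ = κ Δφ in Ω, together with the boundary conditions (−u_s φ e_g + κ ∇φ)·n = 0 on the top and lateral walls Γ₁ ∪ Γ₂ ∪ Γ₄ and ∇φ·n = 0 on the bottom wall Γ₃. Then the potential energy E_p(t) = ∫_Ω φ y dx satisfies, for each t: ∫_Ω (∂φ/∂t) y dx = − ∫_Ω φ (u + u_s e_g)·e_g dx + κ ∫_Ω ∇φ·e_g dx. -/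

import Mathlib

open MeasureTheory Set

/-- Partial derivative in the first spatial direction. -/
noncomputable def d1 (f : ℝ × ℝ → ℝ) (x : ℝ × ℝ) : ℝ := fderiv ℝ f x ((1 : ℝ), (0 : ℝ))

/-- Partial derivative in the second spatial direction. -/
noncomputable def d2 (f : ℝ × ℝ → ℝ) (x : ℝ × ℝ) : ℝ := fderiv ℝ f x ((0 : ℝ), (1 : ℝ))

/-- Gradient of a scalar field on `ℝ²`. -/
noncomputable def grad (f : ℝ × ℝ → ℝ) (x : ℝ × ℝ) : ℝ × ℝ := (d1 f x, d2 f x)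

/-- Divergence of a vector field on `ℝ²`. -/
noncomputable def div2 (w : ℝ × ℝ → ℝ × ℝ) (x : ℝ × ℝ) : ℝ :=
  d1 (fun y => (w y).1) x + d2 (fun y => (w y).2) x

/-- Laplacian of a scalar field on `ℝ²`. -/
noncomputable def lap (f : ℝ × ℝ → ℝ) (x : ℝ × ℝ) : ℝ := d1 (d1 f) x + d2 (d2 f) x

/-- Dot product on `ℝ²`. -/
def dot (a b : ℝ × ℝ) : ℝ := a.1 * b.1 + a.2 * b.2

/-- Unit vector in the direction of gravity. -/
noncomputable def eg : ℝ × ℝ := ((0 : ℝ), (-1 : ℝ))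

lemma contDiff_d1 {f : ℝ × ℝ → ℝ} (hf : ContDiff ℝ 2 f) : ContDiff ℝ 1 (d1 f) := by
  exact (hf.fderiv_right (m := 1) (by norm_num)).clm_apply contDiff_const

lemma contDiff_d2 {f : ℝ × ℝ → ℝ} (hf : ContDiff ℝ 2 f) : ContDiff ℝ 1 (d2 f) := by
  exact (hf.fderiv_right (m := 1) (by norm_num)).clm_apply contDiff_const

lemma continuous_d1 {f : ℝ × ℝ → ℝ} (hf : ContDiff ℝ 1 f) : Continuous (d1 f) := by
  exact ((hf.fderiv_right (m := 0) (by norm_num)).clm_apply contDiff_const).continuous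

lemma continuous_d2 {f : ℝ × ℝ → ℝ} (hf : ContDiff ℝ 1 f) : Continuous (d2 f) := by
  exact ((hf.fderiv_right (m := 0) (by norm_num)).clm_apply contDiff_const).continuous

set_option maxHeartbeats 1000000 in
theorem potential_energy_balance
    (L T u_s κ : ℝ) (hL : 0 < L) (hκ : 0 < κ)
    (u : ℝ × ℝ → ℝ × ℝ) (φ : ℝ × ℝ → ℝ → ℝ)
    (hu : ContDiff ℝ 1 u)
    (hφspace : ∀ t ∈ Icc (0 : ℝ) T, ContDiff ℝ 2 (fun x => φ x t))
    (hφtime : ContDiff ℝ 1 (fun p : (ℝ × ℝ) × ℝ => φ p.1 p.2))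
    (hdiv : ∀ x ∈ Ioo 0 L ×ˢ Ioo (0 : ℝ) 1, div2 u x = 0)
    (hbottom : ∀ x ∈ Icc 0 L, (u (x, 0)).2 = 0)
    (htop : ∀ x ∈ Icc 0 L, (u (x, 1)).2 = 0)
    (hleft : ∀ y ∈ Icc (0 : ℝ) 1, (u (0, y)).1 = 0)
    (hright : ∀ y ∈ Icc (0 : ℝ) 1, (u (L, y)).1 = 0)
    (htransport : ∀ t ∈ Icc (0 : ℝ) T, ∀ x ∈ Ioo 0 L ×ˢ Ioo (0 : ℝ) 1,
      deriv (fun s => φ x s) t + dot (u x + u_s • eg) (grad (fun y => φ y t) x)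
        = κ * lap (fun y => φ y t) x)
    (hfluxtop : ∀ t ∈ Icc (0 : ℝ) T, ∀ x ∈ Icc 0 L,
      dot ((-(u_s * φ (x, 1) t)) • eg + κ • grad (fun y => φ y t) (x, 1)) ((0 : ℝ), 1) = 0)
    (hfluxleft : ∀ t ∈ Icc (0 : ℝ) T, ∀ y ∈ Icc (0 : ℝ) 1,
      dot ((-(u_s * φ (0, y) t)) • eg + κ • grad (fun z => φ z t) (0, y)) ((-1 : ℝ), 0) = 0)
    (hfluxright : ∀ t ∈ Icc (0 : ℝ) T, ∀ y ∈ Icc (0 : ℝ) 1,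
      dot ((-(u_s * φ (L, y) t)) • eg + κ • grad (fun z => φ z t) (L, y)) ((1 : ℝ), 0) = 0)
    (hfluxbottom : ∀ t ∈ Icc (0 : ℝ) T, ∀ x ∈ Icc 0 L,
      dot (grad (fun y => φ y t) (x, 0)) ((0 : ℝ), -1) = 0) :
    ∀ t ∈ Icc (0 : ℝ) T,
      (∫ x in Ioo 0 L ×ˢ Ioo (0 : ℝ) 1, (deriv (fun s => φ x s) t) * x.2)
        = -(∫ x in Ioo 0 L ×ˢ Ioo (0 : ℝ) 1, φ x t * dot (u x + u_s • eg) eg)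
          + κ * ∫ x in Ioo 0 L ×ˢ Ioo (0 : ℝ) 1, dot (grad (fun y => φ y t) x) eg := by
  intro t ht
  have hψ : ContDiff ℝ 2 (fun x => φ x t) := hφspace t ht
  have hψ1 : ContDiff ℝ 1 (fun x => φ x t) := hψ.of_le one_le_two
  have hψd : Differentiable ℝ (fun x => φ x t) := hψ1.differentiable one_ne_zero
  have hq1 : ContDiff ℝ 1 (d1 (fun x => φ x t)) := contDiff_d1 hψ
  have hq2 : ContDiff ℝ 1 (d2 (fun x => φ x t)) := contDiff_d2 hψ
  have hu1 : ContDiff ℝ 1 (fun q : ℝ × ℝ => (u q).1) := hu.fst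
  have hu2 : ContDiff ℝ 1 (fun q : ℝ × ℝ => (u q).2) := hu.snd
  -- the flux vector field V = y (κ ∇φ - φ w), w = u + u_s e_g
  set F : ℝ × ℝ → ℝ := fun p =>
    p.2 * (κ * d1 (fun x => φ x t) p - φ p t * (u p).1) with hFdef
  set G : ℝ × ℝ → ℝ := fun p =>
    p.2 * (κ * d2 (fun x => φ x t) p - φ p t * ((u p).2 - u_s)) with hGdef
  set F' : ℝ × ℝ → ℝ × ℝ →L[ℝ] ℝ := fun p =>
    p.2 • (κ • fderiv ℝ (d1 (fun x => φ x t)) p -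
      (φ p t • fderiv ℝ (fun q : ℝ × ℝ => (u q).1) p +
       (u p).1 • fderiv ℝ (fun x => φ x t) p)) +
    (κ * d1 (fun x => φ x t) p - φ p t * (u p).1) • ContinuousLinearMap.snd ℝ ℝ ℝ with hF'def
  set G' : ℝ × ℝ → ℝ × ℝ →L[ℝ] ℝ := fun p =>
    p.2 • (κ • fderiv ℝ (d2 (fun x => φ x t)) p -
      (φ p t • fderiv ℝ (fun q : ℝ × ℝ => (u q).2) p +
       ((u p).2 - u_s) • fderiv ℝ (fun x => φ x t) p)) +
    (κ * d2 (fun x => φ x t) p - φ p t * ((u p).2 - u_s)) • ContinuousLinearMap.snd ℝ ℝ ℝ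
      with hG'def
  have hF' : ∀ p : ℝ × ℝ, HasFDerivAt F (F' p) p := by
    intro p
    have h1 : HasFDerivAt (d1 (fun x => φ x t)) (fderiv ℝ (d1 (fun x => φ x t)) p) p :=
      (hq1.differentiable one_ne_zero p).hasFDerivAt
    have hψp : HasFDerivAt (fun x => φ x t) (fderiv ℝ (fun x => φ x t) p) p :=
      (hψd p).hasFDerivAt
    have hu1p : HasFDerivAt (fun q : ℝ × ℝ => (u q).1)
        (fderiv ℝ (fun q : ℝ × ℝ => (u q).1) p) p :=
      ((hu1.differentiable one_ne_zero) p).hasFDerivAt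
    have hH : HasFDerivAt (fun p => κ * d1 (fun x => φ x t) p - φ p t * (u p).1)
        (κ • fderiv ℝ (d1 (fun x => φ x t)) p -
          (φ p t • fderiv ℝ (fun q : ℝ × ℝ => (u q).1) p +
           (u p).1 • fderiv ℝ (fun x => φ x t) p)) p :=
      (h1.const_mul κ).sub (hψp.mul hu1p)
    exact hasFDerivAt_snd.mul hH
  have hG' : ∀ p : ℝ × ℝ, HasFDerivAt G (G' p) p := by
    intro p
    have h1 : HasFDerivAt (d2 (fun x => φ x t)) (fderiv ℝ (d2 (fun x => φ x t)) p) p :=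
      (hq2.differentiable one_ne_zero p).hasFDerivAt
    have hψp : HasFDerivAt (fun x => φ x t) (fderiv ℝ (fun x => φ x t) p) p :=
      (hψd p).hasFDerivAt
    have hu2p : HasFDerivAt (fun q : ℝ × ℝ => (u q).2 - u_s)
        (fderiv ℝ (fun q : ℝ × ℝ => (u q).2) p) p := by
      have := ((hu2.differentiable one_ne_zero) p).hasFDerivAt
      simpa using this.sub_const u_s
    have hH : HasFDerivAt (fun p => κ * d2 (fun x => φ x t) p - φ p t * ((u p).2 - u_s))
        (κ • fderiv ℝ (d2 (fun x => φ x t)) p -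
          (φ p t • fderiv ℝ (fun q : ℝ × ℝ => (u q).2) p +
           ((u p).2 - u_s) • fderiv ℝ (fun x => φ x t) p)) p :=
      (h1.const_mul κ).sub (hψp.mul hu2p)
    exact hasFDerivAt_snd.mul hH
  -- pointwise values of the derivatives in the coordinate directions
  have hF'v : ∀ p : ℝ × ℝ, F' p ((1 : ℝ), (0 : ℝ)) =
      p.2 * (κ * d1 (d1 (fun x => φ x t)) p -
        (φ p t * d1 (fun q : ℝ × ℝ => (u q).1) p +
         (u p).1 * d1 (fun x => φ x t) p)) := by
    intro p
    simp [hF'def, d1, ContinuousLinearMap.add_apply, ContinuousLinearMap.smul_apply,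
      ContinuousLinearMap.sub_apply, ContinuousLinearMap.coe_smul', smul_eq_mul,
      ContinuousLinearMap.snd]
  have hG'v : ∀ p : ℝ × ℝ, G' p ((0 : ℝ), (1 : ℝ)) =
      p.2 * (κ * d2 (d2 (fun x => φ x t)) p -
        (φ p t * d2 (fun q : ℝ × ℝ => (u q).2) p +
         ((u p).2 - u_s) * d2 (fun x => φ x t) p)) +
      (κ * d2 (fun x => φ x t) p - φ p t * ((u p).2 - u_s)) := by
    intro p
    simp [hG'def, d2, ContinuousLinearMap.add_apply, ContinuousLinearMap.smul_apply,
      ContinuousLinearMap.sub_apply, ContinuousLinearMap.coe_smul', smul_eq_mul,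
      ContinuousLinearMap.snd]
  -- the divergence integrand
  set K : ℝ × ℝ → ℝ := fun p =>
    κ * d2 (fun x => φ x t) p - φ p t * ((u p).2 - u_s) with hKdef
  have hScont : Continuous (fun p : ℝ × ℝ => F' p ((1 : ℝ), (0 : ℝ)) + G' p ((0 : ℝ), (1 : ℝ))) := by
    have : (fun p : ℝ × ℝ => F' p ((1 : ℝ), (0 : ℝ)) + G' p ((0 : ℝ), (1 : ℝ))) = fun p =>
        (p.2 * (κ * d1 (d1 (fun x => φ x t)) p -
          (φ p t * d1 (fun q : ℝ × ℝ => (u q).1) p +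
           (u p).1 * d1 (fun x => φ x t) p))) +
        (p.2 * (κ * d2 (d2 (fun x => φ x t)) p -
          (φ p t * d2 (fun q : ℝ × ℝ => (u q).2) p +
           ((u p).2 - u_s) * d2 (fun x => φ x t) p)) +
        (κ * d2 (fun x => φ x t) p - φ p t * ((u p).2 - u_s))) := by
      funext p; rw [hF'v p, hG'v p]
    rw [this]
    have c1 := continuous_d1 hq1
    have c2 := continuous_d2 hq2
    have c3 := continuous_d1 hψ1
    have c4 := continuous_d2 hψ1
    have c5 := continuous_d1 hu1
    have c6 := continuous_d2 hu2
    have cψ := hψ1.continuous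
    have cu := hu.continuous
    fun_prop
  have hKcont : Continuous K := by
    have c4 := continuous_d2 hψ1
    have cψ := hψ1.continuous
    have cu := hu.continuous
    fun_prop
  -- the divergence theorem
  have hab : ((0 : ℝ), (0 : ℝ)) ≤ ((L : ℝ), (1 : ℝ)) := ⟨hL.le, zero_le_one⟩
  have hFc : ContinuousOn F (Icc ((0 : ℝ), (0 : ℝ)) ((L : ℝ), (1 : ℝ))) := by
    have c3 := continuous_d1 hψ1
    have cψ := hψ1.continuous
    have cu := hu.continuous
    apply Continuous.continuousOn
    fun_prop
  have hGc : ContinuousOn G (Icc ((0 : ℝ), (0 : ℝ)) ((L : ℝ), (1 : ℝ))) := by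
    have c4 := continuous_d2 hψ1
    have cψ := hψ1.continuous
    have cu := hu.continuous
    apply Continuous.continuousOn
    fun_prop
  have hSi : IntegrableOn (fun p : ℝ × ℝ => F' p ((1 : ℝ), (0 : ℝ)) + G' p ((0 : ℝ), (1 : ℝ)))
      (Icc ((0 : ℝ), (0 : ℝ)) ((L : ℝ), (1 : ℝ))) :=
    hScont.integrableOn_Icc
  have hdivthm := integral_divergence_prod_Icc_of_hasFDerivAt_off_countable_of_le
    F G F' G' ((0 : ℝ), (0 : ℝ)) ((L : ℝ), (1 : ℝ)) hab ∅ countable_empty hFc hGc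
    (fun x _ => hF' x) (fun x _ => hG' x) hSi
  -- boundary terms vanish
  have hG0 : ∀ x : ℝ, G (x, (0 : ℝ)) = 0 := by intro x; simp [hGdef]
  have hG1 : ∀ x ∈ Icc (0 : ℝ) L, G (x, (1 : ℝ)) = 0 := by
    intro x hx
    have h1 := hfluxtop t ht x hx
    have h2 := htop x hx
    simp [dot, grad, eg] at h1
    simp only [hGdef]
    linear_combination h1 - φ (x, 1) t * h2
  have hFL : ∀ y ∈ Icc (0 : ℝ) 1, F ((L : ℝ), y) = 0 := by
    intro y hy
    have h1 := hfluxright t ht y hy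
    have h2 := hright y hy
    simp only [dot, grad, eg, Prod.smul_mk, Prod.mk_add_mk, smul_eq_mul] at h1
    have hd1 : d1 (fun x => φ x t) ((L : ℝ), y) = 0 := by
      have : κ * d1 (fun x => φ x t) ((L : ℝ), y) = 0 := by linarith [h1]
      exact (mul_eq_zero.1 this).resolve_left hκ.ne'
    simp [hFdef, hd1, h2]
  have hF0 : ∀ y ∈ Icc (0 : ℝ) 1, F ((0 : ℝ), y) = 0 := by
    intro y hy
    have h1 := hfluxleft t ht y hy
    have h2 := hleft y hy
    simp only [dot, grad, eg, Prod.smul_mk, Prod.mk_add_mk, smul_eq_mul] at h1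
    have hd1 : d1 (fun x => φ x t) ((0 : ℝ), y) = 0 := by
      have : κ * d1 (fun x => φ x t) ((0 : ℝ), y) = 0 := by linarith [h1]
      exact (mul_eq_zero.1 this).resolve_left hκ.ne'
    simp [hFdef, hd1, h2]
  have hIzero : (∫ x in Icc ((0 : ℝ), (0 : ℝ)) ((L : ℝ), (1 : ℝ)),
      (F' x ((1 : ℝ), (0 : ℝ)) + G' x ((0 : ℝ), (1 : ℝ)))) = 0 := by
    rw [hdivthm]
    have e1 : (∫ x in (0 : ℝ)..L, G (x, (1 : ℝ))) = 0 := by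
      rw [intervalIntegral.integral_congr (g := fun _ => (0 : ℝ))
        (fun x hx => hG1 x (by rwa [uIcc_of_le hL.le] at hx))]
      simp
    have e2 : (∫ x in (0 : ℝ)..L, G (x, (0 : ℝ))) = 0 := by
      rw [intervalIntegral.integral_congr (g := fun _ => (0 : ℝ)) (fun x _ => hG0 x)]
      simp
    have e3 : (∫ y in (0 : ℝ)..1, F ((L : ℝ), y)) = 0 := by
      rw [intervalIntegral.integral_congr (g := fun _ => (0 : ℝ))
        (fun y hy => hFL y (by rwa [uIcc_of_le zero_le_one] at hy))]
      simp
    have e4 : (∫ y in (0 : ℝ)..1, F ((0 : ℝ), y)) = 0 := by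
      rw [intervalIntegral.integral_congr (g := fun _ => (0 : ℝ))
        (fun y hy => hF0 y (by rwa [uIcc_of_le zero_le_one] at hy))]
      simp
    simp [e1, e2, e3, e4]
  -- move between the open and closed rectangles
  have hmeas : (volume : Measure (ℝ × ℝ)).restrict (Ioo 0 L ×ˢ Ioo (0 : ℝ) 1) =
      (volume : Measure (ℝ × ℝ)).restrict (Icc ((0 : ℝ), (0 : ℝ)) ((L : ℝ), (1 : ℝ))) := by
    rw [show Icc ((0 : ℝ), (0 : ℝ)) ((L : ℝ), (1 : ℝ)) = Icc (0 : ℝ) L ×ˢ Icc (0 : ℝ) 1 from by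
      rw [Icc_prod_eq]]
    rw [Measure.volume_eq_prod, ← Measure.prod_restrict, ← Measure.prod_restrict,
      Measure.restrict_congr_set Ioo_ae_eq_Icc,
      Measure.restrict_congr_set Ioo_ae_eq_Icc]
  have hIeq : ∀ f : ℝ × ℝ → ℝ, (∫ x in Ioo 0 L ×ˢ Ioo (0 : ℝ) 1, f x) =
      ∫ x in Icc ((0 : ℝ), (0 : ℝ)) ((L : ℝ), (1 : ℝ)), f x := by
    intro f; rw [hmeas]
  have hsubset : (Ioo 0 L ×ˢ Ioo (0 : ℝ) 1 : Set (ℝ × ℝ)) ⊆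
      Icc ((0 : ℝ), (0 : ℝ)) ((L : ℝ), (1 : ℝ)) := by
    rw [Icc_prod_eq]
    exact prod_mono Ioo_subset_Icc_self Ioo_subset_Icc_self
  have hSiO : IntegrableOn (fun p : ℝ × ℝ => F' p ((1 : ℝ), (0 : ℝ)) + G' p ((0 : ℝ), (1 : ℝ)))
      (Ioo 0 L ×ˢ Ioo (0 : ℝ) 1) := hSi.mono_set hsubset
  have hKiO : IntegrableOn K (Ioo 0 L ×ˢ Ioo (0 : ℝ) 1) :=
    hKcont.integrableOn_Icc.mono_set hsubset
  have hmeasset : MeasurableSet (Ioo 0 L ×ˢ Ioo (0 : ℝ) 1 : Set (ℝ × ℝ)) :=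
    measurableSet_Ioo.prod measurableSet_Ioo
  -- pointwise divergence identity in the interior
  have hSval : ∀ p ∈ Ioo 0 L ×ˢ Ioo (0 : ℝ) 1,
      F' p ((1 : ℝ), (0 : ℝ)) + G' p ((0 : ℝ), (1 : ℝ))
        = p.2 * deriv (fun s => φ p s) t + K p := by
    intro p hp
    have ht1 := htransport t ht p hp
    have hd := hdiv p hp
    rw [hF'v p, hG'v p]
    simp only [hKdef]
    simp [lap, grad, dot, eg, div2] at ht1 hd
    linear_combination (-p.2) * ht1 - p.2 * φ p t * hd
  -- put everything together
  have hLHS : (∫ x in Ioo 0 L ×ˢ Ioo (0 : ℝ) 1, (deriv (fun s => φ x s) t) * x.2)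
      = -(∫ x in Ioo 0 L ×ˢ Ioo (0 : ℝ) 1, K x) := by
    have h1 : (∫ x in Ioo 0 L ×ˢ Ioo (0 : ℝ) 1, (deriv (fun s => φ x s) t) * x.2)
        = ∫ x in Ioo 0 L ×ˢ Ioo (0 : ℝ) 1,
          ((F' x ((1 : ℝ), (0 : ℝ)) + G' x ((0 : ℝ), (1 : ℝ))) - K x) := by
      apply setIntegral_congr_fun hmeasset
      intro p hp
      show deriv (fun s => φ p s) t * p.2
        = F' p ((1 : ℝ), (0 : ℝ)) + G' p ((0 : ℝ), (1 : ℝ)) - K p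
      rw [hSval p hp]
      ring
    rw [h1, integral_sub hSiO hKiO,
      hIeq (fun p : ℝ × ℝ => F' p ((1 : ℝ), (0 : ℝ)) + G' p ((0 : ℝ), (1 : ℝ))), hIzero]
    ring
  have hRHS : -(∫ x in Ioo 0 L ×ˢ Ioo (0 : ℝ) 1, φ x t * dot (u x + u_s • eg) eg)
      + κ * ∫ x in Ioo 0 L ×ˢ Ioo (0 : ℝ) 1, dot (grad (fun y => φ y t) x) eg
      = -(∫ x in Ioo 0 L ×ˢ Ioo (0 : ℝ) 1, K x) := by
    have e1 : (∫ x in Ioo 0 L ×ˢ Ioo (0 : ℝ) 1, φ x t * dot (u x + u_s • eg) eg)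
        = ∫ x in Ioo 0 L ×ˢ Ioo (0 : ℝ) 1, (-(φ x t * ((u x).2 - u_s))) := by
      apply setIntegral_congr_fun hmeasset
      intro p _
      simp only [dot, eg, Prod.smul_mk, Prod.mk_add_mk, smul_eq_mul, Prod.fst_add,
        Prod.snd_add, Prod.smul_fst, Prod.smul_snd]
      ring
    have e2 : (∫ x in Ioo 0 L ×ˢ Ioo (0 : ℝ) 1, dot (grad (fun y => φ y t) x) eg)
        = ∫ x in Ioo 0 L ×ˢ Ioo (0 : ℝ) 1, (-(d2 (fun x => φ x t) x)) := by
      apply setIntegral_congr_fun hmeasset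
      intro p _
      simp only [dot, grad, eg]
      ring
    have hint1 : IntegrableOn (fun x : ℝ × ℝ => φ x t * ((u x).2 - u_s))
        (Ioo 0 L ×ˢ Ioo (0 : ℝ) 1) := by
      have cψ := hψ1.continuous
      have cu := hu.continuous
      have : Continuous (fun x : ℝ × ℝ => φ x t * ((u x).2 - u_s)) := by fun_prop
      exact this.integrableOn_Icc.mono_set hsubset
    have hint2 : IntegrableOn (fun x : ℝ × ℝ => d2 (fun x => φ x t) x)
        (Ioo 0 L ×ˢ Ioo (0 : ℝ) 1) :=
      (continuous_d2 hψ1).integrableOn_Icc.mono_set hsubset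
    have e3 : (∫ x in Ioo 0 L ×ˢ Ioo (0 : ℝ) 1, K x)
        = κ * (∫ x in Ioo 0 L ×ˢ Ioo (0 : ℝ) 1, d2 (fun x => φ x t) x)
          - ∫ x in Ioo 0 L ×ˢ Ioo (0 : ℝ) 1, φ x t * ((u x).2 - u_s) := by
      rw [hKdef]
      rw [integral_sub (hint2.const_mul κ) hint1, integral_const_mul]
    rw [e1, e2, e3, integral_neg, integral_neg]
    ring
  rw [hLHS, hRHS]
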